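/- Let X be a set, f : X → X, and h : X → ℝ with h ≥ 1 satisfying condition (∗) with data r, M, c. For z ∈ X define N(z) ∈ ℕ ∪ {∞} to be the least N ≥ 1 with h(f^[N](z)) > M (and ∞ if no such N exists). Suppose h' ≥ 1 is another function comparable to h (i.e. h' < e·h and h < e'·h' pointwise for some e, e' > 1), satisfying (∗) with data r', M', c', with associated function N'. Then there exists a constant C such that N'(z) ≤ N(z) + C and N(z) ≤ N'(z) + C for all z ∈ X (with the convention ∞ + C = ∞). -/

import Mathlib

open scoped Classical

/-- `Nfun f h M z` is the least `N ≥ 1` with `h (f^[N] z) > M`, or `∞` if none exists. -/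
noncomputable def Nfun {X : Type*} (f : X → X) (h : X → ℝ) (M : ℝ) (z : X) : ℕ∞ :=
  sInf {n : ℕ∞ | ∃ N : ℕ, 1 ≤ N ∧ M < h (f^[N] z) ∧ n = N}

lemma Nfun_le_aux {X : Type*} (f : X → X) (h h' : X → ℝ) (e' : ℝ) (he' : 0 < e')
    (hcomp' : ∀ z, h z < e' * h' z)
    (r : ℕ) (M : ℝ) (hM : 0 < M) (c : ℝ) (hc : 1 < c)
    (hstar : ∀ z, M < h z → c * h z < h (f^[r] z))
    (M' : ℝ) :
    ∃ C : ℕ, ∀ z : X, Nfun f h' M' z ≤ Nfun f h M z + (C : ℕ∞) := by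
  obtain ⟨k, hk⟩ : ∃ k : ℕ, e' * M' / M < c ^ k := pow_unbounded_of_one_lt _ hc
  have hk' : e' * M' < c ^ k * M := (div_lt_iff₀ hM).mp hk
  refine ⟨k * r, fun z => ?_⟩
  rcases eq_or_ne (Nfun f h M z) ⊤ with htop | hne
  · simp [htop]
  · have hSne : {n : ℕ∞ | ∃ N : ℕ, 1 ≤ N ∧ M < h (f^[N] z) ∧ n = N}.Nonempty := by
      by_contra hS
      rw [Set.not_nonempty_iff_eq_empty] at hS
      exact hne (by simp [Nfun, hS])
    obtain ⟨N, hN1, hNM, hNcast⟩ := csInf_mem hSne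
    have key : ∀ j : ℕ, c ^ j * M < h (f^[N + j * r] z) := by
      intro j
      induction j with
      | zero => simpa using hNM
      | succ j ih =>
        have hMlt : M < h (f^[N + j * r] z) := by
          have : M ≤ c ^ j * M := le_mul_of_one_le_left hM.le (one_le_pow₀ hc.le)
          linarith
        have h2 := hstar _ hMlt
        rw [← Function.iterate_add_apply] at h2
        have hidx : r + (N + j * r) = N + (j + 1) * r := by ring
        rw [hidx] at h2
        have : c ^ (j + 1) * M = c * (c ^ j * M) := by ring
        rw [this]
        calc c * (c ^ j * M) < c * h (f^[N + j * r] z) :=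
              (mul_lt_mul_iff_right₀ (by linarith)).mpr ih
          _ < h (f^[N + (j + 1) * r] z) := h2
    have hM' : M' < h' (f^[N + k * r] z) := by
      have h1 := key k
      have h2 := hcomp' (f^[N + k * r] z)
      have : e' * M' < e' * h' (f^[N + k * r] z) := by linarith
      exact lt_of_mul_lt_mul_left this he'.le
    have hmem : ((N + k * r : ℕ) : ℕ∞) ∈
        {n : ℕ∞ | ∃ N' : ℕ, 1 ≤ N' ∧ M' < h' (f^[N'] z) ∧ n = N'} :=
      ⟨N + k * r, by omega, hM', rfl⟩
    calc Nfun f h' M' z ≤ ((N + k * r : ℕ) : ℕ∞) := sInf_le hmem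
      _ = (N : ℕ∞) + (k * r : ℕ) := by push_cast; rfl
      _ = Nfun f h M z + (k * r : ℕ) := by unfold Nfun; rw [hNcast]

theorem Nfun_comparable {X : Type*} (f : X → X) (h h' : X → ℝ)
    (hone : ∀ z, 1 ≤ h z) (h'one : ∀ z, 1 ≤ h' z)
    (e e' : ℝ) (he : 1 < e) (he' : 1 < e')
    (hcomp : ∀ z, h' z < e * h z) (hcomp' : ∀ z, h z < e' * h' z)
    (r : ℕ) (hr : 1 ≤ r) (M : ℝ) (hM : 0 < M) (c : ℝ) (hc : 1 < c)
    (hstar : ∀ z, M < h z → c * h z < h (f^[r] z))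
    (r' : ℕ) (hr' : 1 ≤ r') (M' : ℝ) (hM' : 0 < M') (c' : ℝ) (hc' : 1 < c')
    (hstar' : ∀ z, M' < h' z → c' * h' z < h' (f^[r'] z)) :
    ∃ C : ℕ, ∀ z : X,
      Nfun f h' M' z ≤ Nfun f h M z + (C : ℕ∞) ∧
      Nfun f h M z ≤ Nfun f h' M' z + (C : ℕ∞) := by
  obtain ⟨C1, hC1⟩ := Nfun_le_aux f h h' e' (by linarith) hcomp' r M hM c hc hstar M'
  obtain ⟨C2, hC2⟩ := Nfun_le_aux f h' h e (by linarith) hcomp r' M' hM' c' hc' hstar' M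
  refine ⟨max C1 C2, fun z => ⟨(hC1 z).trans ?_, (hC2 z).trans ?_⟩⟩
  · exact add_le_add_right (by exact_mod_cast le_max_left C1 C2) _
  · exact add_le_add_right (by exact_mod_cast le_max_right C1 C2) _
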